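/- Let m ≥ 1 be an integer, let c_1,…,c_m and c̄_1,…,c̄_m be reals, write a⁺ = a·1(a > 0) (so a⁺ = a if a > 0 and a⁺ = 0 otherwise), and let x_1,…,x_m be positive reals. Let P be the m×m real matrix with entries P_{l,i} = Σ_{j=0}^{l} (c_i⁺)^j (c̄_i⁺)^{l−j} for row indices l = 0,1,…,m−1 and column indices i = 1,…,m (so the first row is all ones). If det P ≠ 0 and Σ_{i=1}^m (c_i⁺)^k x_i = Σ_{i=1}^m (c̄_i⁺)^k x_i for every k = 1,…,m, then c_i⁺ = c̄_i⁺ for all i = 1,…,m. -/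

import Mathlib

/-- The positive part `a⁺ = a · 1(a > 0)`. -/
noncomputable def posP (a : ℝ) : ℝ := if 0 < a then a else 0

/-- If the matrix `P` with entries `P_{l,i} = Σ_{j=0}^l (c_i⁺)^j (c̄_i⁺)^{l−j}` has nonzero
determinant, the `x_i` are positive, and the positive-part power sums agree,
`Σ_i (c_i⁺)^k x_i = Σ_i (c̄_i⁺)^k x_i` for `k = 1,…,m`, then `c_i⁺ = c̄_i⁺` for all `i`. -/
theorem stmt_18 (m : ℕ) (hm : 1 ≤ m) (c cb : Fin m → ℝ)
    (x : Fin m → ℝ) (hx : ∀ i, 0 < x i)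
    (P : Matrix (Fin m) (Fin m) ℝ)
    (hP : ∀ (l i : Fin m), P l i =
      ∑ j ∈ Finset.range ((l : ℕ) + 1), (posP (c i)) ^ j * (posP (cb i)) ^ ((l : ℕ) - j))
    (hdet : P.det ≠ 0)
    (hsum : ∀ k ∈ Finset.Icc 1 m,
      ∑ i, (posP (c i)) ^ k * x i = ∑ i, (posP (cb i)) ^ k * x i) :
    ∀ i, posP (c i) = posP (cb i) := by
  set a : Fin m → ℝ := fun i => posP (c i)
  set b : Fin m → ℝ := fun i => posP (cb i)
  set v : Fin m → ℝ := fun i => (a i - b i) * x i with hv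
  have hmv : P.mulVec v = 0 := by
    funext l
    have hk : (l : ℕ) + 1 ∈ Finset.Icc 1 m := by
      simp [Nat.succ_le_iff, l.is_lt]
    have hs := hsum ((l : ℕ) + 1) hk
    have key : ∀ i, P l i * v i = a i ^ ((l : ℕ) + 1) * x i - b i ^ ((l : ℕ) + 1) * x i := by
      intro i
      have hg : (∑ j ∈ Finset.range ((l : ℕ) + 1), a i ^ j * b i ^ ((l : ℕ) - j)) * (a i - b i)
          = a i ^ ((l : ℕ) + 1) - b i ^ ((l : ℕ) + 1) := by
        have := geom_sum₂_mul (a i) (b i) ((l : ℕ) + 1)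
        simpa using this
      rw [hP l i]
      calc (∑ j ∈ Finset.range ((l : ℕ) + 1), a i ^ j * b i ^ ((l : ℕ) - j)) * ((a i - b i) * x i)
          = ((∑ j ∈ Finset.range ((l : ℕ) + 1), a i ^ j * b i ^ ((l : ℕ) - j)) * (a i - b i)) * x i := by ring
        _ = (a i ^ ((l : ℕ) + 1) - b i ^ ((l : ℕ) + 1)) * x i := by rw [hg]
        _ = _ := by ring
    have : (P.mulVec v) l = 0 := by
      simp only [Matrix.mulVec, dotProduct]
      rw [Finset.sum_congr rfl fun i _ => key i, Finset.sum_sub_distrib, hs, sub_self]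
    simpa using this
  have hv0 : v = 0 := Matrix.eq_zero_of_mulVec_eq_zero hdet hmv
  intro i
  have : (a i - b i) * x i = 0 := congrFun hv0 i
  have := mul_eq_zero.mp this
  rcases this with h | h
  · linarith [sub_eq_zero.mp h]
  · exact absurd h (ne_of_gt (hx i))
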